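/- Let G be a finite simple graph with adjacency matrix (a_{ij}) and fix a configuration of angles θ_1,…,θ_n ∈ ℝ. Then the expected cut under randomized rounding satisfies E(θ) = (1/π)∫_0^π Cut(φ) dφ = (1/(2π)) ∑_{i,j=1}^n a_{ij} d_{S^1}(θ_i, θ_j). -/

import Mathlib

open Real Finset MeasureTheory intervalIntegral

/-- The circle distance between angles `x` and `y`:
the minimum over integers `k` of `|x - y - 2πk|`. -/
noncomputable def dS1 (x y : ℝ) : ℝ := ⨅ k : ℤ, |x - y - 2 * Real.pi * k|

lemma arccos_cos_le_abs (t : ℝ) : Real.arccos (Real.cos t) ≤ |t| := by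
  rcases le_or_gt |t| Real.pi with h | h
  · rw [← Real.cos_abs, Real.arccos_cos (abs_nonneg t) h]
  · exact le_trans (Real.arccos_le_pi _) h.le

lemma dS1_eq_arccos (x y : ℝ) : dS1 x y = Real.arccos (Real.cos (x - y)) := by
  set d := x - y with hd
  have hπ : (0:ℝ) < Real.pi := Real.pi_pos
  have hper : ∀ k : ℤ, Real.cos (d - 2 * Real.pi * k) = Real.cos d := by
    intro k
    have := Real.cos_sub_int_mul_two_pi d k
    rw [← this]; ring_nf
  have hlb : ∀ k : ℤ, Real.arccos (Real.cos d) ≤ |d - 2 * Real.pi * k| := by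
    intro k
    rw [← hper k]
    exact arccos_cos_le_abs _
  refine le_antisymm ?_ (le_ciInf hlb)
  -- witness : nearest multiple
  set k₀ : ℤ := round (d / (2 * Real.pi)) with hk
  have h2π : (0:ℝ) < 2 * Real.pi := by linarith
  have habs : |d - 2 * Real.pi * k₀| ≤ Real.pi := by
    have h1 : |d / (2 * Real.pi) - k₀| ≤ 1/2 := abs_sub_round _
    have heq : d - 2 * Real.pi * k₀ = 2 * Real.pi * (d / (2 * Real.pi) - k₀) := by
      field_simp
    have : |d - 2 * Real.pi * k₀| = 2 * Real.pi * |d / (2 * Real.pi) - k₀| := by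
      rw [heq, abs_mul, abs_of_pos h2π]
    rw [this]
    nlinarith
  have : Real.arccos (Real.cos d) = |d - 2 * Real.pi * k₀| := by
    rw [← hper k₀, ← Real.cos_abs, Real.arccos_cos (abs_nonneg _) habs]
  rw [this]
  exact ciInf_le ⟨0, fun v ⟨k, hk⟩ => hk ▸ abs_nonneg _⟩ k₀

lemma key (x y : ℝ) :
    (∫ φ in (0:ℝ)..Real.pi,
      (if Real.sin (x - φ) * Real.sin (y - φ) < 0 then (1:ℝ) else 0)) = dS1 x y := by
  have hπ : (0:ℝ) < Real.pi := Real.pi_pos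
  set d := x - y with hd
  set c := x + y with hc
  set α := Real.arccos (Real.cos d) with hα
  set g : ℝ → ℝ := fun ψ => if Real.cos d < Real.cos ψ then (1:ℝ) else 0 with hg
  have hprod : ∀ φ : ℝ, Real.sin (x - φ) * Real.sin (y - φ) < 0 ↔
      Real.cos d < Real.cos (c - 2 * φ) := by
    intro φ
    have h := Real.cos_sub_cos d (c - 2 * φ)
    have h1 : (d + (c - 2*φ))/2 = x - φ := by rw [hd, hc]; ring
    have h2 : (d - (c - 2*φ))/2 = -(y - φ) := by rw [hd, hc]; ring
    rw [h1, h2, Real.sin_neg] at h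
    constructor <;> intro hh <;> nlinarith
  have hcongr1 : (∫ φ in (0:ℝ)..Real.pi,
      (if Real.sin (x - φ) * Real.sin (y - φ) < 0 then (1:ℝ) else 0))
      = ∫ φ in (0:ℝ)..Real.pi, g (c - 2 * φ) := by
    apply intervalIntegral.integral_congr
    intro φ _
    simp only [hg]
    rw [if_congr (hprod φ) rfl rfl]
  rw [hcongr1]
  -- substitution
  have hgmeas : Measurable g :=
    Measurable.ite (measurableSet_lt measurable_const Real.measurable_cos)
      measurable_const measurable_const
  have hgint : ∀ a b : ℝ, IntervalIntegrable g volume a b := by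
    intro a b
    rw [intervalIntegrable_iff]
    have hfin : volume (Set.uIoc a b) < ⊤ := by rw [Set.uIoc]; exact measure_Ioc_lt_top
    apply Integrable.mono' ((MeasureTheory.integrableOn_const (C := (1:ℝ)) hfin.ne)) hgmeas.aestronglyMeasurable
    filter_upwards with ψ
    simp only [hg]
    split <;> simp
  have hcomp : (∫ φ in (0:ℝ)..Real.pi, g (c - 2 * φ))
      = (2:ℝ)⁻¹ • ∫ ψ in (c - 2*Real.pi)..c, g ψ := by
    have h1 : (∫ φ in (0:ℝ)..Real.pi, (fun u => g (c - u)) (2 * φ))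
        = (2:ℝ)⁻¹ • ∫ u in (2*(0:ℝ))..(2*Real.pi), g (c - u) :=
      intervalIntegral.integral_comp_mul_left (fun u => g (c - u)) two_ne_zero
    simp only [mul_zero] at h1
    rw [h1]
    congr 1
    rw [intervalIntegral.integral_comp_sub_left g c]
    norm_num
  rw [hcomp]
  -- periodicity
  have hper : Function.Periodic g (2 * Real.pi) := by
    intro ψ
    simp only [hg, Real.cos_add_two_pi]
  have hshift : (∫ ψ in (c - 2*Real.pi)..c, g ψ) = ∫ ψ in (-Real.pi)..Real.pi, g ψ := by
    have := hper.intervalIntegral_add_eq (c - 2*Real.pi) (-Real.pi)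
    have e1 : c - 2*Real.pi + 2*Real.pi = c := by ring
    have e2 : -Real.pi + 2*Real.pi = Real.pi := by ring
    rw [e1, e2] at this
    exact this
  rw [hshift]
  -- evaluate on [-π, π]
  have hα0 : 0 ≤ α := Real.arccos_nonneg _
  have hαπ : α ≤ Real.pi := Real.arccos_le_pi _
  have hcosα : Real.cos α = Real.cos d := Real.cos_arccos (neg_one_le_cos d) (Real.cos_le_one d)
  have hcongr2 : (∫ ψ in (-Real.pi)..Real.pi, g ψ)
      = ∫ ψ in (-Real.pi)..Real.pi, Set.indicator (Set.Ioo (-α) α) (fun _ => (1:ℝ)) ψ := by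
    apply intervalIntegral.integral_congr
    intro ψ hψ
    rw [Set.uIcc_of_le (by linarith)] at hψ
    have habs : |ψ| ∈ Set.Icc 0 Real.pi := ⟨abs_nonneg _, abs_le.mpr ⟨hψ.1, hψ.2⟩⟩
    have hiff : Real.cos d < Real.cos ψ ↔ ψ ∈ Set.Ioo (-α) α := by
      rw [← hcosα, ← Real.cos_abs ψ]
      rw [Real.strictAntiOn_cos.lt_iff_gt ⟨hα0, hαπ⟩ habs]
      constructor
      · intro h; exact Set.mem_Ioo.mpr (abs_lt.mp h)
      · intro h; exact abs_lt.mpr ⟨h.1, h.2⟩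
    simp only [hg, Set.indicator_apply]
    rw [if_congr hiff rfl rfl]
  rw [hcongr2]
  have hsub : Set.Ioo (-α) α ⊆ Set.Ioc (-Real.pi) Real.pi := by
    intro ψ hψ
    exact ⟨lt_of_le_of_lt (by linarith) hψ.1, le_of_lt (lt_of_lt_of_le hψ.2 hαπ)⟩
  rw [intervalIntegral.integral_of_le (by linarith : -Real.pi ≤ Real.pi)]
  rw [MeasureTheory.setIntegral_indicator measurableSet_Ioo]
  rw [Set.inter_eq_self_of_subset_right hsub] at *
  rw [MeasureTheory.setIntegral_const, measureReal_def, Real.volume_Ioo]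
  simp only [smul_eq_mul, mul_one]
  rcases le_or_gt α 0 with h0 | h0
  · have hα0' : α = 0 := le_antisymm h0 hα0
    rw [hα0']
    simp [dS1_eq_arccos, ← hα, hα0']
    exact hα0'.symm
  · rw [ENNReal.toReal_ofReal (by linarith)]
    rw [dS1_eq_arccos, ← hα]
    ring
/-- The size of the cut induced by the line through the origin at angle `φ`:
half the number of (ordered) adjacent pairs separated by the line. -/
noncomputable def cutAt {n : ℕ} (a : Fin n → Fin n → ℝ) (θ : Fin n → ℝ) (φ : ℝ) : ℝ :=
  (1 / 2) * ∑ i, ∑ j, a i j *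
    (if Real.sin (θ i - φ) * Real.sin (θ j - φ) < 0 then 1 else 0)

/-- The expected cut under randomized rounding of the configuration θ. -/
noncomputable def expCut {n : ℕ} (a : Fin n → Fin n → ℝ) (θ : Fin n → ℝ) : ℝ :=
  (1 / Real.pi) * ∫ φ in (0:ℝ)..Real.pi, cutAt a θ φ

set_option maxHeartbeats 1600000 in
theorem stmt3 (n : ℕ) (a : Fin n → Fin n → ℝ)
    (hsymm : ∀ i j, a i j = a j i)
    (h01 : ∀ i j, a i j = 0 ∨ a i j = 1)
    (hdiag : ∀ i, a i i = 0)
    (θ : Fin n → ℝ) :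
    expCut a θ = (1 / (2 * Real.pi)) * ∑ i, ∑ j, a i j * dS1 (θ i) (θ j) := by
  
  have hπ : (0:ℝ) < Real.pi := Real.pi_pos
  have hind : ∀ i j : Fin n, IntervalIntegrable
      (fun φ => a i j * (if Real.sin (θ i - φ) * Real.sin (θ j - φ) < 0 then (1:ℝ) else 0))
      volume 0 Real.pi := by
    intro i j
    have hmeas : Measurable (fun φ => a i j *
        (if Real.sin (θ i - φ) * Real.sin (θ j - φ) < 0 then (1:ℝ) else 0)) := by
      apply Measurable.const_mul
      apply Measurable.ite _ measurable_const measurable_const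
      apply measurableSet_lt _ measurable_const
      apply Continuous.measurable
      exact (Real.continuous_sin.comp (continuous_const.sub continuous_id)).mul
        (Real.continuous_sin.comp (continuous_const.sub continuous_id))
    rw [intervalIntegrable_iff]
    have hfin : volume (Set.uIoc (0:ℝ) Real.pi) < ⊤ := by rw [Set.uIoc]; exact measure_Ioc_lt_top
    apply Integrable.mono' ((MeasureTheory.integrableOn_const (C := |a i j|) hfin.ne))
      hmeas.aestronglyMeasurable
    filter_upwards with φ
    rw [Real.norm_eq_abs, abs_mul]
    have : |if Real.sin (θ i - φ) * Real.sin (θ j - φ) < 0 then (1:ℝ) else 0| ≤ 1 := by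
      split <;> simp
    nlinarith [abs_nonneg (a i j)]
  have hI : (∫ φ in (0:ℝ)..Real.pi, cutAt a θ φ)
      = (1/2) * ∑ i, ∑ j, a i j * dS1 (θ i) (θ j) := by
    have hswap : (∫ φ in (0:ℝ)..Real.pi, ∑ i, ∑ j, a i j *
        (if Real.sin (θ i - φ) * Real.sin (θ j - φ) < 0 then (1:ℝ) else 0))
        = ∑ i, ∫ φ in (0:ℝ)..Real.pi, ∑ j, a i j *
        (if Real.sin (θ i - φ) * Real.sin (θ j - φ) < 0 then (1:ℝ) else 0) := by
      refine intervalIntegral.integral_finset_sum (fun i _ => ?_)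
      have h := IntervalIntegrable.sum (f := fun j φ => a i j *
          (if Real.sin (θ i - φ) * Real.sin (θ j - φ) < 0 then (1:ℝ) else 0))
        Finset.univ (fun j _ => hind i j)
      have e : (∑ j, fun φ => a i j *
          (if Real.sin (θ i - φ) * Real.sin (θ j - φ) < 0 then (1:ℝ) else 0))
          = (fun φ => ∑ j, a i j *
          (if Real.sin (θ i - φ) * Real.sin (θ j - φ) < 0 then (1:ℝ) else 0)) :=
        funext fun φ => Finset.sum_apply φ _ _
      rwa [e] at h
    unfold cutAt
    rw [intervalIntegral.integral_const_mul, hswap]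
    congr 1
    refine Finset.sum_congr rfl fun i _ => ?_
    have h2 : (∫ φ in (0:ℝ)..Real.pi, ∑ j, a i j *
        (if Real.sin (θ i - φ) * Real.sin (θ j - φ) < 0 then (1:ℝ) else 0))
        = ∑ j, a i j * ∫ φ in (0:ℝ)..Real.pi,
        (if Real.sin (θ i - φ) * Real.sin (θ j - φ) < 0 then (1:ℝ) else 0) := by
      refine (intervalIntegral.integral_finset_sum (fun j _ => hind i j)).trans ?_
      exact Finset.sum_congr rfl fun j _ => intervalIntegral.integral_const_mul _ _
    rw [h2]
    exact Finset.sum_congr rfl fun j _ => by rw [key (θ i) (θ j)]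
  unfold expCut
  rw [hI, ← mul_assoc]
  congr 1
  rw [div_mul_div_comm, one_mul, mul_comm]
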